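/- Suppose C is malnormal in at least one of the factors A, B of G = A ∗_C B. Then for every subgroup D of C and every g ∈ G that lies neither in A nor in B (equivalently, every g of reduced length at least 2), one has D ∩ g⁻¹ D g = {1}. -/

import Mathlib

section Aux

open Monoid Monoid.PushoutI Function Subgroup List

variable {ι : Type*} {Gi : ι → Type*} {H : Type*} [∀ i, Group (Gi i)] [Group H]
  {φ' : ∀ i, H →* Gi i}

/-- Product of a list of letters in the pushout. -/
def lprod (φ' : ∀ i, H →* Gi i) (ℓ : List ((i : ι) × Gi i)) : PushoutI φ' :=
  (ℓ.map fun l => PushoutI.of (φ := φ') l.1 l.2).prod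

@[simp] lemma lprod_nil : lprod φ' [] = 1 := rfl

@[simp] lemma lprod_cons (l : (i : ι) × Gi i) (ℓ : List ((i : ι) × Gi i)) :
    lprod φ' (l :: ℓ) = PushoutI.of (φ := φ') l.1 l.2 * lprod φ' ℓ := by
  simp [lprod]

@[simp] lemma lprod_append (ℓ₁ ℓ₂ : List ((i : ι) × Gi i)) :
    lprod φ' (ℓ₁ ++ ℓ₂) = lprod φ' ℓ₁ * lprod φ' ℓ₂ := by
  simp [lprod]

@[simp] lemma lprod_revinv (ℓ : List ((i : ι) × Gi i)) :
    lprod φ' ((ℓ.map fun l => ⟨l.1, l.2⁻¹⟩).reverse) = (lprod φ' ℓ)⁻¹ := by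
  induction ℓ with
  | nil => simp
  | cons l ℓ ih =>
    rw [List.map_cons, List.reverse_cons]
    simp only [lprod_append, lprod_cons, lprod_nil, ih]
    simp [mul_inv_rev]

lemma lprod_revinv' (ℓ : List ((i : ι) × Gi i)) :
    lprod φ' (ℓ.reverse.map fun l => ⟨l.1, l.2⁻¹⟩) = (lprod φ' ℓ)⁻¹ := by
  rw [List.map_reverse]
  exact lprod_revinv ℓ

lemma ofCoprodI_word_prod (w : CoprodI.Word Gi) :
    PushoutI.ofCoprodI (φ := φ') w.prod = lprod φ' w.toList := by
  simp [CoprodI.Word.prod, lprod, map_list_prod, List.map_map, Function.comp_def]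

lemma lprod_not_mem_base (hφ : ∀ i, Injective (φ' i))
    {ℓ : List ((i : ι) × Gi i)} (hne : ℓ ≠ [])
    (hred : ∀ l ∈ ℓ, l.2 ∉ (φ' l.1).range)
    (hch : ℓ.Chain' fun l l' => l.1 ≠ l'.1) :
    lprod φ' ℓ ∉ (PushoutI.base φ').range := by
  intro hmem
  have hne1 : ∀ l ∈ ℓ, l.2 ≠ 1 := fun l hl h1 => hred l hl (h1 ▸ one_mem _)
  let w : CoprodI.Word Gi := ⟨ℓ, hne1, hch⟩
  have hredw : PushoutI.Reduced φ' w := fun l hl => hred l hl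
  have := hredw.eq_empty_of_mem_range hφ (by rwa [ofCoprodI_word_prod])
  apply hne
  simpa [CoprodI.Word.empty, w] using congrArg CoprodI.Word.toList this

lemma not_mem_range_of_transversal (d : PushoutI.NormalWord.Transversal φ') {i : ι} {x : Gi i}
    (hx : x ∈ d.set i) (h1 : x ≠ 1) : x ∉ (φ' i).range := by
  intro hr
  have hinj := (d.compl i).1
  have := hinj (a₁ := ⟨⟨x, hr⟩, ⟨1, d.one_mem i⟩⟩) (a₂ := ⟨⟨1, one_mem _⟩, ⟨x, hx⟩⟩) (by simp)
  exact h1 (congrArg (fun p => (p.1 : Gi i)) this)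


lemma key_lemma (hφ : ∀ i, Injective (φ' i)) (i₀ : ι)
    (hmal : ∀ a : Gi i₀, a ∉ (φ' i₀).range → ∀ y : PushoutI φ',
      y ∈ (PushoutI.base φ').range →
      PushoutI.of (φ := φ') i₀ a * y * (PushoutI.of (φ := φ') i₀ a)⁻¹ ∈ (PushoutI.base φ').range →
      y = 1) :
    ∀ ℓ : List ((i : ι) × Gi i),
      (∀ l ∈ ℓ, l.2 ∉ (φ' l.1).range) →
      ℓ.Chain' (fun l l' => l.1 ≠ l'.1) →
      ∀ y ∈ (PushoutI.base φ').range,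
        lprod φ' ℓ * y * (lprod φ' ℓ)⁻¹ ∈ (PushoutI.base φ').range →
        i₀ ∈ ℓ.map Sigma.fst → y = 1 := by
  intro ℓ
  induction ℓ using List.reverseRecOn with
  | nil => intro _ _ y _ _ h; simp at h
  | append_singleton ℓ' la ih =>
    obtain ⟨i, a⟩ := la
    intro hred hch y hy hconj hmem
    have haR : a ∉ (φ' i).range := hred ⟨i, a⟩ (by simp)
    obtain ⟨c, hc⟩ := hy
    have hyi : y = PushoutI.of (φ := φ') i (φ' i c) := by
      rw [PushoutI.of_apply_eq_base, hc]
    have hza : PushoutI.of (φ := φ') i a * y * (PushoutI.of (φ := φ') i a)⁻¹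
        = PushoutI.of (φ := φ') i (a * φ' i c * a⁻¹) := by
      rw [hyi, ← map_inv, ← map_mul, ← map_mul]
    have hconj' : lprod φ' ℓ' * (PushoutI.of (φ := φ') i a * y *
        (PushoutI.of (φ := φ') i a)⁻¹) * (lprod φ' ℓ')⁻¹ ∈ (PushoutI.base φ').range := by
      simpa [mul_assoc, mul_inv_rev] using hconj
    have hlast : ∀ x ∈ ℓ'.getLast?, x.1 ≠ i := by
      have h3 := (List.isChain_append.1 hch).2.2
      intro x hx
      exact h3 x hx ⟨i, a⟩ rfl
    by_cases h : a * φ' i c * a⁻¹ ∈ (φ' i).range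
    · have hz : PushoutI.of (φ := φ') i a * y * (PushoutI.of (φ := φ') i a)⁻¹
          ∈ (PushoutI.base φ').range := by
        obtain ⟨c', hc'⟩ := h
        rw [hza, ← hc', PushoutI.of_apply_eq_base]
        exact ⟨c', rfl⟩
      by_cases hi : i = i₀
      · subst hi
        exact hmal a haR y ⟨c, hc⟩ hz
      · have hmem' : i₀ ∈ ℓ'.map Sigma.fst := by
          rcases List.mem_map.1 hmem with ⟨x, hx, hxi⟩
          rcases List.mem_append.1 hx with hx | hx
          · exact List.mem_map.2 ⟨x, hx, hxi⟩
          · exfalso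
            apply hi
            rcases List.mem_singleton.1 hx with rfl
            exact hxi
        have hz1 := ih (fun l hl => hred l (by simp [hl]))
          (hch.prefix ⟨[⟨i, a⟩], rfl⟩) _ hz hconj' hmem'
        have h4 := congrArg
          (fun t => (PushoutI.of (φ := φ') i a)⁻¹ * t * PushoutI.of (φ := φ') i a) hz1
        simpa [mul_assoc] using h4
    · exfalso
      refine lprod_not_mem_base hφ
        (ℓ := ℓ' ++ ⟨i, a * φ' i c * a⁻¹⟩ :: (ℓ'.reverse.map fun l => ⟨l.1, l.2⁻¹⟩))
        (by simp) ?_ ?_ ?_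
      · intro l hl
        rcases List.mem_append.1 hl with hl | hl
        · exact hred l (by simp [hl])
        · rcases List.mem_cons.1 hl with rfl | hl
          · exact h
          · obtain ⟨x, hx, rfl⟩ := List.mem_map.1 hl
            have hx' := hred x (by simp [List.mem_reverse.1 hx])
            exact fun hr => hx' (inv_mem_iff.1 hr)
      · show List.IsChain _ _; rw [List.isChain_append]
        refine ⟨hch.prefix ⟨[⟨i, a⟩], rfl⟩, ?_, ?_⟩
        · rw [List.isChain_cons]
          constructor
          · intro z hz
            rw [List.head?_map, List.head?_reverse] at hz
            obtain ⟨x, hx, rfl⟩ := Option.map_eq_some_iff.1 hz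
            exact (hlast x hx).symm
          · refine (List.isChain_map _).2 ?_
            refine List.isChain_reverse.2 ?_
            exact (hch.prefix ⟨[⟨i, a⟩], rfl⟩).imp fun a b hab => hab.symm
        · intro x hx z hz
          simp only [List.head?_cons, Option.mem_def, Option.some.injEq] at hz
          subst hz
          exact hlast x hx
      · have h5 : lprod φ' ℓ' * PushoutI.of (φ := φ') i (a * φ' i c * a⁻¹) *
            (lprod φ' ℓ')⁻¹ ∈ (PushoutI.base φ').range := by
          rw [← hza]
          simpa [mul_assoc] using hconj'
        simpa [mul_assoc] using h5

end Aux





open Monoid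

universe u

/-- The two factors of the amalgam, indexed by `Bool`. -/
def Fac (A B : Type u) : Bool → Type u
  | true => A
  | false => B

instance FacGroup (A B : Type u) [Group A] [Group B] : (b : Bool) → Group (Fac A B b)
  | true => inferInstanceAs (Group A)
  | false => inferInstanceAs (Group B)

variable {A B C : Type u} [Group A] [Group B] [Group C]

/-- The family of monomorphisms `C → A`, `C → B`. -/
def amalgHom (φ : C →* A) (ψ : C →* B) : (b : Bool) → C →* Fac A B b
  | true => φ
  | false => ψ

variable (φ : C →* A) (ψ : C →* B)

/-- The amalgamated free product `G = A ∗_C B`, i.e. the pushout of `φ` and `ψ`. -/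
abbrev Amalg : Type u := Monoid.PushoutI (amalgHom φ ψ)

/-- The factor `A`, identified with its image in `G = A ∗_C B`. -/
def facA : Subgroup (Amalg φ ψ) := (Monoid.PushoutI.of (φ := amalgHom φ ψ) true).range

/-- The factor `B`, identified with its image in `G = A ∗_C B`. -/
def facB : Subgroup (Amalg φ ψ) := (Monoid.PushoutI.of (φ := amalgHom φ ψ) false).range

/-- The amalgamated subgroup `C`, identified with its image in `G = A ∗_C B`. -/
def amalgC : Subgroup (Amalg φ ψ) := (Monoid.PushoutI.base (amalgHom φ ψ)).range

/-- `c * g₁ ⋯ gₙ` (with the list `L = [g₁, …, gₙ]`) is a reduced form: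
`c ∈ C`, each `gᵢ ∈ (A ∪ B) ∖ C`, and consecutive letters lie in different factors. -/
def ReducedForm (c : Amalg φ ψ) (L : List (Amalg φ ψ)) : Prop :=
  c ∈ amalgC φ ψ ∧
  (∀ x ∈ L, (x ∈ facA φ ψ ∨ x ∈ facB φ ψ) ∧ x ∉ amalgC φ ψ) ∧
  L.Chain' (fun x y => (x ∈ facA φ ψ → y ∈ facB φ ψ) ∧ (x ∈ facB φ ψ → y ∈ facA φ ψ))

/-- A reduced form `c * g₁ ⋯ gₙ` is cyclically reduced if `n = 0`, or `n = 1` and the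
element is not conjugate to an element of `C`, or `n ≥ 2` and `g₁`, `gₙ` lie in different
factors. -/
def CyclicallyReducedForm (c : Amalg φ ψ) (L : List (Amalg φ ψ)) : Prop :=
  ReducedForm φ ψ c L ∧
  (L.length = 0 ∨
    (L.length = 1 ∧ ∀ x : Amalg φ ψ, x⁻¹ * (c * L.prod) * x ∉ amalgC φ ψ) ∨
    (2 ≤ L.length ∧ ∀ x y : Amalg φ ψ, x ∈ L.head? → y ∈ L.getLast? →
      ((x ∈ facA φ ψ → y ∈ facB φ ψ) ∧ (x ∈ facB φ ψ → y ∈ facA φ ψ))))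

/-- An element of `G = A ∗_C B` is cyclically reduced if it has a cyclically reduced
reduced form. -/
def CyclicallyReduced (g : Amalg φ ψ) : Prop :=
  ∃ (c : Amalg φ ψ) (L : List (Amalg φ ψ)), g = c * L.prod ∧ CyclicallyReducedForm φ ψ c L

/-- `C` is malnormal in `K` (both viewed as subgroups of an ambient group):
`C ∩ x⁻¹ C x = {1}` for every `x ∈ K ∖ C`. -/
def MalnormalIn {G : Type*} [Group G] (C K : Subgroup G) : Prop :=
  ∀ x ∈ K, x ∉ C → ∀ y ∈ C, x * y * x⁻¹ ∈ C → y = 1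

/-- If `C` is malnormal in at least one of the factors `A`, `B`, then for every subgroup
`D ≤ C` and every `g ∈ G` lying neither in `A` nor in `B` (i.e. of reduced length `≥ 2`),
one has `D ∩ g⁻¹ D g = {1}`. -/
theorem malnormal_one_factor
    (hφ : Function.Injective φ) (hψ : Function.Injective ψ)
    (hmal : MalnormalIn (amalgC φ ψ) (facA φ ψ) ∨ MalnormalIn (amalgC φ ψ) (facB φ ψ))
    (D : Subgroup (Amalg φ ψ)) (hD : D ≤ amalgC φ ψ)
    (g : Amalg φ ψ) (hgA : g ∉ facA φ ψ) (hgB : g ∉ facB φ ψ) :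
    ∀ y ∈ D, g * y * g⁻¹ ∈ D → y = 1 := by
  classical
  intro y hy hconj
  have hφ' : ∀ b, Function.Injective (amalgHom φ ψ b) := by
    intro b
    cases b
    · exact hψ
    · exact hφ
  obtain ⟨d⟩ := Monoid.PushoutI.NormalWord.transversal_nonempty (amalgHom φ ψ) hφ'
  letI M := @Monoid.PushoutI.NormalWord.mulAction Bool (Fac A B) C _ _ (amalgHom φ ψ) d
    instDecidableEqBool (fun b => Classical.decEq _)
  set w : Monoid.PushoutI.NormalWord d := g • (Monoid.PushoutI.NormalWord.empty : Monoid.PushoutI.NormalWord d) with hwdef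
  have hprod : w.prod = g := by
    rw [hwdef, Monoid.PushoutI.NormalWord.prod_smul]
    simp
  set ℓ := w.toList with hℓ
  have hg : g = Monoid.PushoutI.base (amalgHom φ ψ) w.head * lprod (amalgHom φ ψ) ℓ := by
    rw [← hprod, Monoid.PushoutI.NormalWord.prod, ofCoprodI_word_prod]
  have hred : ∀ l ∈ ℓ, l.2 ∉ ((amalgHom φ ψ) l.1).range := by
    intro l hl
    exact not_mem_range_of_transversal d (w.normalized l.1 l.2 hl) (w.ne_one l hl)
  have hch : ℓ.Chain' fun l l' => l.1 ≠ l'.1 := w.chain_ne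
  have hrange : ∀ (i : Bool) (x : Fac A B i),
      g ≠ Monoid.PushoutI.of (φ := amalgHom φ ψ) i x := by
    intro i x hgx
    cases i
    · exact hgB ⟨x, hgx.symm⟩
    · exact hgA ⟨x, hgx.symm⟩
  have h2 : ∃ l₁ l₂ rest, ℓ = l₁ :: l₂ :: rest := by
    match hd : ℓ with
    | [] =>
      exfalso
      apply hrange true ((amalgHom φ ψ) true w.head)
      rw [Monoid.PushoutI.of_apply_eq_base]
      rw [hg, hd]
      simp
    | [l] =>
      exfalso
      apply hrange l.1 ((amalgHom φ ψ) l.1 w.head * l.2)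
      rw [map_mul, Monoid.PushoutI.of_apply_eq_base]
      rw [hg, hd]
      simp
    | l₁ :: l₂ :: rest => exact ⟨l₁, l₂, rest, rfl⟩
  obtain ⟨l₁, l₂, rest, hd⟩ := h2
  have hne12 : l₁.1 ≠ l₂.1 := by
    have := hch
    rw [hd] at this
    exact (List.isChain_cons_cons.1 this).1
  have bool_trick : ∀ x y z : Bool, x ≠ y → z = x ∨ z = y := by decide
  have hmem : ∀ i₀ : Bool, i₀ ∈ ℓ.map Sigma.fst := by
    intro i₀
    rw [hd]
    rcases bool_trick l₁.1 l₂.1 i₀ hne12 with h | h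
    · rw [h]
      exact List.mem_map_of_mem (f := Sigma.fst) (List.mem_cons_self)
    · rw [h]
      exact List.mem_map_of_mem (f := Sigma.fst) (List.mem_cons_of_mem _ (List.mem_cons_self))
  -- membership facts
  have hyC : y ∈ (Monoid.PushoutI.base (amalgHom φ ψ)).range := hD hy
  have hPy : lprod (amalgHom φ ψ) ℓ * y * (lprod (amalgHom φ ψ) ℓ)⁻¹ ∈
      (Monoid.PushoutI.base (amalgHom φ ψ)).range := by
    have hgy : g * y * g⁻¹ ∈ (Monoid.PushoutI.base (amalgHom φ ψ)).range := hD hconj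
    rw [hg] at hgy
    have h1 : Monoid.PushoutI.base (amalgHom φ ψ) w.head ∈
        (Monoid.PushoutI.base (amalgHom φ ψ)).range := ⟨w.head, rfl⟩
    have h2' := mul_mem (mul_mem (inv_mem h1) hgy) h1
    have heq : (Monoid.PushoutI.base (amalgHom φ ψ) w.head)⁻¹ *
        (Monoid.PushoutI.base (amalgHom φ ψ) w.head * lprod (amalgHom φ ψ) ℓ * y *
          (Monoid.PushoutI.base (amalgHom φ ψ) w.head * lprod (amalgHom φ ψ) ℓ)⁻¹) *
        Monoid.PushoutI.base (amalgHom φ ψ) w.head =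
        lprod (amalgHom φ ψ) ℓ * y * (lprod (amalgHom φ ψ) ℓ)⁻¹ := by
      group
    rwa [heq] at h2'
  have main : ∀ i₀ : Bool,
      MalnormalIn (amalgC φ ψ) (Monoid.PushoutI.of (φ := amalgHom φ ψ) i₀).range → y = 1 := by
    intro i₀ hm
    have hmal' : ∀ a : Fac A B i₀, a ∉ ((amalgHom φ ψ) i₀).range →
        ∀ y' : Amalg φ ψ, y' ∈ (Monoid.PushoutI.base (amalgHom φ ψ)).range →
        Monoid.PushoutI.of (φ := amalgHom φ ψ) i₀ a * y' *
          (Monoid.PushoutI.of (φ := amalgHom φ ψ) i₀ a)⁻¹ ∈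
          (Monoid.PushoutI.base (amalgHom φ ψ)).range → y' = 1 := by
      intro a ha y' hy' hconj'
      refine hm (Monoid.PushoutI.of (φ := amalgHom φ ψ) i₀ a) ⟨a, rfl⟩ ?_ y' hy' hconj'
      intro hbase
      refine lprod_not_mem_base hφ' (ℓ := [⟨i₀, a⟩]) (by simp) ?_ (List.IsChain.singleton _) ?_
      · intro l hl
        rcases List.mem_singleton.1 hl with rfl
        exact ha
      · simpa [amalgC] using hbase
    exact key_lemma hφ' i₀ hmal' ℓ hred hch y hyC hPy (hmem i₀)
  rcases hmal with hm | hm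
  · exact main true hm
  · exact main false hm
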